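/- Let G be a finite abelian group and let F be a functor from P(G) to types. Then the restriction map from the set of sections of F over P(G) to the set of sections of the restriction of F to P'(G) is a bijection. Consequently, the limit of F over P(G) can be computed by restricting to the subposet P'(G) of sets of cardinality at most 2. -/

import Mathlib

open CategoryTheory

/-- `P(G)`: the poset of nonempty sets of subgroups of `G` that are totally ordered by
inclusion, ordered by set inclusion. -/
abbrev ChainPoset (G : Type*) [Group G] : Type _ :=
  {S : Set (Subgroup G) // S.Nonempty ∧ IsChain (· ≤ ·) S}

/-- `P'(G)`: the full subposet of `P(G)` of sets of cardinality at most `2`. -/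
abbrev ChainPoset.small (G : Type*) [Group G] : Type _ :=
  {S : ChainPoset G // S.1.ncard ≤ 2}

/-- The inclusion functor `P'(G) ⥤ P(G)`. -/
def ChainPoset.smallIncl (G : Type*) [Group G] : ChainPoset.small G ⥤ ChainPoset G :=
  Monotone.functor (f := (Subtype.val : ChainPoset.small G → ChainPoset G))
    (fun _ _ h => h)

section Aux
variable {G : Type*} [Group G]

/-- The singleton chain `{H}`. -/
def ChainPosetAux.sing (H : Subgroup G) : ChainPoset G :=
  ⟨{H}, Set.singleton_nonempty H, Set.subsingleton_singleton.isChain⟩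

def ChainPosetAux.singSmall (H : Subgroup G) : ChainPoset.small G :=
  ⟨ChainPosetAux.sing H, by simp [ChainPosetAux.sing]⟩

def ChainPosetAux.pair (H K : Subgroup G) (c : H ≤ K ∨ K ≤ H) : ChainPoset G :=
  ⟨{H, K}, ⟨H, by simp⟩, by
    intro a ha b hb _
    simp only [Set.mem_insert_iff, Set.mem_singleton_iff] at ha hb
    rcases ha with rfl | rfl <;> rcases hb with rfl | rfl <;> tauto⟩

def ChainPosetAux.pairSmall (H K : Subgroup G) (c : H ≤ K ∨ K ≤ H) : ChainPoset.small G :=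
  ⟨ChainPosetAux.pair H K c, by
    simpa [ChainPosetAux.pair] using (Set.ncard_insert_le H {K}).trans (by simp)⟩

end Aux

open ChainPosetAux in
/-- **The limit over `P(G)` is computed on `P'(G)`.**  For a finite abelian group `G`
and a functor `F : P(G) ⥤ Type`, the restriction map from sections of `F` over `P(G)`
to sections of the restriction of `F` to the subposet `P'(G)` of sets of cardinality
`≤ 2` is a bijection. -/
theorem sections_restrict_to_small_bijective (G : Type*) [CommGroup G] [Finite G]
    (F : ChainPoset G ⥤ Type*) :
    Function.Bijective
      (fun x : F.sections =>
        (⟨fun S => x.1 S.1, fun {S T} f => x.2 ((ChainPoset.smallIncl G).map f)⟩ :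
          (ChainPoset.smallIncl G ⋙ F).sections)) := by
  have hmap : ∀ {A B : ChainPoset G} (f g : A ⟶ B), F.map f = F.map g := by
    intro A B f g; rw [Subsingleton.elim f g]
  -- the candidate value of a section at S, using H ∈ S
  set val : ∀ (y : (ChainPoset.smallIncl G ⋙ F).sections) (S : ChainPoset G)
      (H : Subgroup G), H ∈ S.1 → F.obj S :=
    fun y S H hH =>
      F.map (homOfLE (show sing H ≤ S from Set.singleton_subset_iff.mpr hH))
        (y.1 (singSmall H)) with hval
  -- independence of choice of H
  have key : ∀ (y : (ChainPoset.smallIncl G ⋙ F).sections) (S : ChainPoset G)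
      (H K : Subgroup G) (hH : H ∈ S.1) (hK : K ∈ S.1),
      val y S H hH = val y S K hK := by
    intro y S H K hH hK
    rcases eq_or_ne H K with rfl | hne
    · rfl
    · have c : H ≤ K ∨ K ≤ H := S.2.2 hH hK hne
      have hPS : (pair H K c : ChainPoset G) ≤ S :=
        Set.insert_subset hH (Set.singleton_subset_iff.mpr hK)
      have hstep : ∀ (L : Subgroup G) (hL : L ∈ S.1) (hLP : sing L ≤ pair H K c),
          val y S L hL = F.map (homOfLE hPS) (y.1 (pairSmall H K c)) := by
        intro L hL hLP
        have hy := y.2 (homOfLE (show singSmall L ≤ pairSmall H K c from hLP))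
        simp only [Functor.comp_map] at hy
        rw [hval]
        dsimp only
        erw [hmap (homOfLE _) (homOfLE hLP ≫ homOfLE hPS), FunctorToTypes.map_comp_apply]
        erw [hmap (homOfLE hLP) ((ChainPoset.smallIncl G).map
          (homOfLE (show singSmall L ≤ pairSmall H K c from hLP))), hy]
      rw [hstep H hH (by simp [sing, pair]), hstep K hK (by simp [sing, pair])]
  constructor
  · -- injectivity
    intro x₁ x₂ h
    have h' := congrArg Subtype.val h
    simp only at h'
    ext S
    obtain ⟨H, hH⟩ := S.2.1
    have e1 := x₁.2 (homOfLE (show sing H ≤ S from Set.singleton_subset_iff.mpr hH))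
    have e2 := x₂.2 (homOfLE (show sing H ≤ S from Set.singleton_subset_iff.mpr hH))
    rw [← e1, ← e2]
    exact congrArg (F.map _) (congrFun h' (singSmall H))
  · -- surjectivity
    intro y
    refine ⟨⟨fun S => val y S S.2.1.choose S.2.1.choose_spec, ?_⟩, ?_⟩
    · intro S T f
      have hST : S ≤ T := leOfHom f
      set H := S.2.1.choose with hH
      have hHS : H ∈ S.1 := S.2.1.choose_spec
      have hHT : H ∈ T.1 := hST hHS
      have : F.map f (val y S H hHS) = val y T H hHT := by
        rw [hval]
        dsimp only
        erw [← FunctorToTypes.map_comp_apply,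
          hmap (homOfLE _ ≫ f) (homOfLE (Set.singleton_subset_iff.mpr hHT))]
      rw [this, key y T H T.2.1.choose hHT T.2.1.choose_spec]
    · -- restriction equals y
      apply Subtype.ext
      funext S
      simp only
      set H := S.1.2.1.choose with hH
      have hHS : H ∈ S.1.1 := S.1.2.1.choose_spec
      have hsing : singSmall H ≤ S := Set.singleton_subset_iff.mpr hHS
      have hy := y.2 (homOfLE hsing)
      simp only [Functor.comp_map] at hy
      rw [hval]
      dsimp only
      erw [hmap (homOfLE _) ((ChainPoset.smallIncl G).map (homOfLE hsing)), hy]
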